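/- Let (V,β,ρ,μ) be a representation of a Hom-pre-Lie algebra (A,·,α) with β invertible. Define ρ⋆, μ⋆ : A → gl(V*) by ⟨ρ⋆(x)(ξ), u⟩ = −⟨ξ, β^{-2}(ρ(α(x))(u))⟩ and ⟨μ⋆(x)(ξ), u⟩ = −⟨ξ, β^{-2}(μ(α(x))(u))⟩ for x ∈ A, ξ ∈ V*, u ∈ V. Then (V*, (β^{-1})*, ρ⋆ − μ⋆, −μ⋆) is a representation of (A,·,α), where (β^{-1})* denotes the transpose of β^{-1}. -/

import Mathlib

/-- A Hom-pre-Lie algebra structure on `A`: a bilinear product and an algebra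
morphism `α` satisfying the Hom-pre-Lie identity. -/
def IsHomPreLie {K A : Type*} [Field K] [AddCommGroup A] [Module K A]
    (mul : A →ₗ[K] A →ₗ[K] A) (α : A →ₗ[K] A) : Prop :=
  (∀ x y, α (mul x y) = mul (α x) (α y)) ∧
  (∀ x y z, mul (mul x y) (α z) - mul (α x) (mul y z)
      = mul (mul y x) (α z) - mul (α y) (mul x z))

/-- A representation of a Hom-Lie algebra `(L, bracket, α)` on `V` with respect to `β`. -/
def IsHomLieRep {K L V : Type*} [Field K] [AddCommGroup L] [Module K L]
    [AddCommGroup V] [Module K V]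
    (bracket : L →ₗ[K] L →ₗ[K] L) (α : L →ₗ[K] L)
    (β : V →ₗ[K] V) (ρ : L →ₗ[K] Module.End K V) : Prop :=
  (∀ x, ρ (α x) ∘ₗ β = β ∘ₗ ρ x) ∧
  (∀ x y, ρ (bracket x y) ∘ₗ β = ρ (α x) ∘ₗ ρ y - ρ (α y) ∘ₗ ρ x)

/-- A representation `(V, β, ρ, μ)` of a Hom-pre-Lie algebra `(A, mul, α)`:
`ρ` is a representation of the sub-adjacent Hom-Lie algebra (whose bracket is the
commutator `mul - mul.flip`) with respect to `β`, together with the two compatibility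
conditions for `μ`. -/
def IsHomPreLieRep {K A V : Type*} [Field K] [AddCommGroup A] [Module K A]
    [AddCommGroup V] [Module K V]
    (mul : A →ₗ[K] A →ₗ[K] A) (α : A →ₗ[K] A)
    (β : V →ₗ[K] V) (ρ μ : A →ₗ[K] Module.End K V) : Prop :=
  IsHomLieRep (mul - mul.flip) α β ρ ∧
  (∀ x, β ∘ₗ μ x = μ (α x) ∘ₗ β) ∧
  (∀ x y, μ (α y) ∘ₗ μ x - μ (mul x y) ∘ₗ β = μ (α y) ∘ₗ ρ x - ρ (α x) ∘ₗ μ y)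

/-- The twisted dual map `ρ⋆ : A → gl(V*)`, defined by
`⟨ρ⋆(x)(ξ), u⟩ = −⟨ξ, β⁻²(ρ(α(x))(u))⟩`. -/
noncomputable def starRep {K A V : Type*} [Field K] [AddCommGroup A] [Module K A]
    [AddCommGroup V] [Module K V]
    (α : A →ₗ[K] A) (β : V ≃ₗ[K] V) (ρ : A →ₗ[K] Module.End K V) :
    A →ₗ[K] Module.End K (V →ₗ[K] K) where
  toFun x := - (((β.symm.toLinearMap ∘ₗ β.symm.toLinearMap) ∘ₗ ρ (α x)).dualMap :
      Module.End K (Module.Dual K V))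
  map_add' x y := by
    ext ξ u
    simp [LinearMap.dualMap_apply]
    abel
  map_smul' c x := by
    ext ξ u
    simp [LinearMap.dualMap_apply]

instance starRepAddCommGroup {K A V : Type*} [Field K] [AddCommGroup A] [Module K A]
    [AddCommGroup V] [Module K V] : AddCommGroup (A →ₗ[K] Module.End K (V →ₗ[K] K)) :=
  @LinearMap.addCommGroup K K A (Module.End K (V →ₗ[K] K)) _ _ _ LinearMap.addCommGroup _ _
    (RingHom.id K)


lemma starRep_apply {K A V : Type*} [Field K] [AddCommGroup A] [Module K A]
    [AddCommGroup V] [Module K V]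
    (α : A →ₗ[K] A) (β : V ≃ₗ[K] V) (ρ : A →ₗ[K] Module.End K V)
    (x : A) (ξ : Module.Dual K V) (u : V) :
    starRep α β ρ x ξ u = -ξ (β.symm (β.symm (ρ (α x) u))) := rfl

lemma starRepHom_sub_apply {K A V : Type*} [Field K] [AddCommGroup A] [Module K A]
    [AddCommGroup V] [Module K V] (F G : A →ₗ[K] Module.End K (V →ₗ[K] K)) (x : A) :
    (F - G) x = F x - G x := rfl

lemma starRepHom_neg_apply {K A V : Type*} [Field K] [AddCommGroup A] [Module K A]
    [AddCommGroup V] [Module K V] (F : A →ₗ[K] Module.End K (V →ₗ[K] K)) (x : A) :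
    (-F) x = -(F x) := rfl

/-- Let `(V,β,ρ,μ)` be a representation of a Hom-pre-Lie algebra
`(A,·,α)` with `β` invertible.  Then `(V*, (β⁻¹)*, ρ⋆ − μ⋆, −μ⋆)` is a representation
of `(A,·,α)` (the dual representation), where
`⟨ρ⋆(x)(ξ), u⟩ = −⟨ξ, β⁻²(ρ(α(x))(u))⟩`, `⟨μ⋆(x)(ξ), u⟩ = −⟨ξ, β⁻²(μ(α(x))(u))⟩`
and `(β⁻¹)*` is the transpose of `β⁻¹`. -/
theorem dual_rep_isHomPreLieRep
    {K A V : Type*} [Field K] [AddCommGroup A] [Module K A]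
    [AddCommGroup V] [Module K V]
    (mul : A →ₗ[K] A →ₗ[K] A) (α : A ≃ₗ[K] A)
    (hA : IsHomPreLie mul (α : A →ₗ[K] A))
    (β : V ≃ₗ[K] V) (ρ μ : A →ₗ[K] Module.End K V)
    (hrep : IsHomPreLieRep mul (α : A →ₗ[K] A) (β : V →ₗ[K] V) ρ μ) :
    IsHomPreLieRep mul (α : A →ₗ[K] A)
      (β.symm.toLinearMap.dualMap)
      (starRep (α : A →ₗ[K] A) β ρ - starRep (α : A →ₗ[K] A) β μ)
      (- starRep (α : A →ₗ[K] A) β μ) := by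

  obtain ⟨⟨hρ1, hρ2⟩, hμ1, hμ2⟩ := hrep
  obtain ⟨hm, -⟩ := hA
  have hαm' : ∀ a b : A, mul (α a) (α b) = α (mul a b) := fun a b => (hm a b).symm
  have hρβ : ∀ (z : A) (v : V), ρ (α z) (β v) = β (ρ z v) := fun z v => by
    simpa using LinearMap.congr_fun (hρ1 z) v
  have hμβ : ∀ (z : A) (v : V), μ (α z) (β v) = β (μ z v) := fun z v => by
    simpa using (LinearMap.congr_fun (hμ1 z) v).symm
  have hρβ' : ∀ (z : A) (v : V), ρ z (β.symm v) = β.symm (ρ (α z) v) := fun z v => by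
    have h := hρβ z (β.symm v)
    rw [β.apply_symm_apply] at h
    rw [h, β.symm_apply_apply]
  have hμβ' : ∀ (z : A) (v : V), μ z (β.symm v) = β.symm (μ (α z) v) := fun z v => by
    have h := hμβ z (β.symm v)
    rw [β.apply_symm_apply] at h
    rw [h, β.symm_apply_apply]
  refine ⟨⟨?_, ?_⟩, ?_, ?_⟩
  · -- condition (a)
    intro x
    ext ξ u
    simp [starRepHom_sub_apply, starRepHom_neg_apply, starRep_apply, hρβ', hμβ']
  · -- condition (b)
    intro x y
    ext ξ u
    have E1 := congrArg (fun v => ξ (β.symm (β.symm (β.symm (β.symm v)))))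
      (LinearMap.congr_fun (hρ2 (α (α x)) (α (α y))) u)
    have E2 := congrArg (fun v => ξ (β.symm (β.symm (β.symm (β.symm v)))))
      (LinearMap.congr_fun (hμ2 (α (α x)) (α (α y))) u)
    have E3 := congrArg (fun v => ξ (β.symm (β.symm (β.symm (β.symm v)))))
      (LinearMap.congr_fun (hμ2 (α (α y)) (α (α x))) u)
    simp only [LinearMap.sub_apply, LinearMap.flip_apply, LinearMap.coe_comp,
      Function.comp_apply, map_sub, hαm', hρβ, hμβ, hρβ', hμβ',
      LinearEquiv.coe_coe, LinearEquiv.apply_symm_apply, LinearEquiv.symm_apply_apply,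
      LinearMap.dualMap_apply, starRepHom_sub_apply, starRepHom_neg_apply, starRep_apply, LinearMap.neg_apply, map_neg] at E1 E2 E3 ⊢
    linear_combination -E1 - E2 + E3
  · -- condition (c)
    intro x
    ext ξ u
    simp [starRepHom_sub_apply, starRepHom_neg_apply, starRep_apply, hρβ', hμβ']
  · -- condition (d)
    intro x y
    ext ξ u
    have E2 := congrArg (fun v => ξ (β.symm (β.symm (β.symm (β.symm v)))))
      (LinearMap.congr_fun (hμ2 (α (α x)) (α (α y))) u)
    simp only [LinearMap.sub_apply, LinearMap.flip_apply, LinearMap.coe_comp,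
      Function.comp_apply, map_sub, hαm', hρβ, hμβ, hρβ', hμβ',
      LinearEquiv.coe_coe, LinearEquiv.apply_symm_apply, LinearEquiv.symm_apply_apply,
      LinearMap.dualMap_apply, starRepHom_sub_apply, starRepHom_neg_apply, starRep_apply, LinearMap.neg_apply, map_neg] at E2 ⊢
    linear_combination E2
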